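/- Fix a ∈ (0,1) and d ∈ (0,1). The marginal-return function G(s) := a(1-a)(1-d)·((1 - exp(-s·d))/s)·exp(-(a(1-d)/d)·(1 - exp(-s·d))) is strictly decreasing in s on (0, ∞). -/

import Mathlib

/-- `(1 - exp(-t))/t` is strictly decreasing on `(0,∞)`. -/
lemma aux_strictAntiOn :
    StrictAntiOn (fun t : ℝ => (1 - Real.exp (-t)) / t) (Set.Ioi (0 : ℝ)) := by
  apply strictAntiOn_of_deriv_neg (convex_Ioi 0)
  · apply ContinuousOn.div
    · fun_prop
    · fun_prop
    · intro t ht; exact ne_of_gt ht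
  · intro t ht
    rw [interior_Ioi] at ht
    have ht0 : t ≠ 0 := ne_of_gt ht
    have h1 : HasDerivAt (fun t : ℝ => 1 - Real.exp (-t)) (Real.exp (-t)) t := by
      have := (Real.hasDerivAt_exp (-t)).comp t (hasDerivAt_neg t)
      exact ((hasDerivAt_const t (1:ℝ)).sub this).congr_deriv (by ring)
    have h2 : HasDerivAt (fun t : ℝ => (1 - Real.exp (-t)) / t)
        ((Real.exp (-t) * t - (1 - Real.exp (-t)) * 1) / t ^ 2) t :=
      h1.div (hasDerivAt_id t) ht0
    rw [h2.deriv]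
    have hlt : t + 1 < Real.exp t := Real.add_one_lt_exp ht0
    have hexp : Real.exp (-t) * Real.exp t = 1 := by
      rw [← Real.exp_add]; simp
    have hpos : 0 < Real.exp t := Real.exp_pos t
    have hnum : Real.exp (-t) * t - (1 - Real.exp (-t)) * 1 < 0 := by
      nlinarith [hexp, hlt, hpos, Real.exp_pos (-t)]
    have ht2 : (0:ℝ) < t ^ 2 := by positivity
    exact div_neg_of_neg_of_pos hnum ht2

theorem marginal_return_strictAntiOn (a d : ℝ)
    (ha : a ∈ Set.Ioo (0 : ℝ) 1) (hd : d ∈ Set.Ioo (0 : ℝ) 1) :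
    StrictAntiOn
      (fun s : ℝ =>
        a * (1 - a) * (1 - d) * ((1 - Real.exp (-(s * d))) / s) *
          Real.exp (-(a * (1 - d) / d * (1 - Real.exp (-(s * d))))))
      (Set.Ioi (0 : ℝ)) := by
  obtain ⟨ha0, ha1⟩ := ha
  obtain ⟨hd0, hd1⟩ := hd
  have h1a : (0:ℝ) < 1 - a := by linarith
  have h1d : (0:ℝ) < 1 - d := by linarith
  have hC : 0 < a * (1 - a) * (1 - d) := by positivity
  have hk : 0 < a * (1 - d) / d := by positivity
  intro x hx y hy hxy
  simp only [Set.mem_Ioi] at hx hy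
  -- first factor comparison via aux
  have hxd : x * d ∈ Set.Ioi (0:ℝ) := by simp; positivity
  have hyd : y * d ∈ Set.Ioi (0:ℝ) := by simp; positivity
  have hlt : x * d < y * d := by nlinarith
  have hf := aux_strictAntiOn hxd hyd hlt
  simp only at hf
  -- translate to (1 - exp(-(s*d)))/s
  have hfx : (1 - Real.exp (-(x * d))) / x = d * ((1 - Real.exp (-(x * d))) / (x * d)) := by
    field_simp
  have hfy : (1 - Real.exp (-(y * d))) / y = d * ((1 - Real.exp (-(y * d))) / (y * d)) := by
    field_simp
  have hfy_pos : 0 < (1 - Real.exp (-(y * d))) / y := by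
    apply div_pos _ hy
    have : Real.exp (-(y * d)) < 1 := by
      rw [Real.exp_lt_one_iff]; simp; positivity
    linarith
  have hflt : (1 - Real.exp (-(y * d))) / y < (1 - Real.exp (-(x * d))) / x := by
    rw [hfx, hfy]
    exact mul_lt_mul_of_pos_left hf hd0
  -- exponential factor
  have hexp_lt : Real.exp (-(a * (1 - d) / d * (1 - Real.exp (-(y * d))))) <
      Real.exp (-(a * (1 - d) / d * (1 - Real.exp (-(x * d))))) := by
    apply Real.exp_lt_exp.2
    have : Real.exp (-(y * d)) < Real.exp (-(x * d)) := by
      apply Real.exp_lt_exp.2; linarith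
    nlinarith
  have hexp_pos : 0 < Real.exp (-(a * (1 - d) / d * (1 - Real.exp (-(y * d))))) :=
    Real.exp_pos _
  have hfx_pos : 0 < (1 - Real.exp (-(x * d))) / x := lt_trans hfy_pos hflt
  calc a * (1 - a) * (1 - d) * ((1 - Real.exp (-(y * d))) / y) *
        Real.exp (-(a * (1 - d) / d * (1 - Real.exp (-(y * d)))))
      < a * (1 - a) * (1 - d) * ((1 - Real.exp (-(x * d))) / x) *
        Real.exp (-(a * (1 - d) / d * (1 - Real.exp (-(x * d))))) := by
        apply mul_lt_mul
        · exact mul_lt_mul_of_pos_left hflt hC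
        · exact le_of_lt hexp_lt
        · exact hexp_pos
        · positivity
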